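/- For every even integer m ≥ 6, the graph H_m is Hamiltonian, i.e., there exists a cycle in H_m that visits every one of its 2m+1 vertices exactly once. -/

import Mathlib

open SimpleGraph

/-- Vertex type for the graphs on `2m+1` vertices: `Sum.inl i` is the vertex `pᵢ`,
`Sum.inr (Sum.inl i)` is the vertex `qᵢ` (indices taken modulo `m`),
and `Sum.inr (Sum.inr ())` is the apex vertex `a`. -/
abbrev GVert (m : ℕ) := Sum (ZMod m) (Sum (ZMod m) Unit)

/-- The vertex `pᵢ`. -/
def pV {m : ℕ} (i : ZMod m) : GVert m := Sum.inl i

/-- The vertex `qᵢ`. -/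
def qV {m : ℕ} (i : ZMod m) : GVert m := Sum.inr (Sum.inl i)

/-- The apex vertex `a`. -/
def aV (m : ℕ) : GVert m := Sum.inr (Sum.inr ())

/-- The graph `H_m` (intended for even `m ≥ 6`): edges are `a qᵢ` for all `i`,
`pᵢ pᵢ₊₁` for all `i`, and `pᵢ q_{i + (2k-1)}` for all `i` and `0 ≤ k ≤ (m-2)/2`,
all indices taken modulo `m`. -/
def HGraph (m : ℕ) : SimpleGraph (GVert m) :=
  SimpleGraph.fromRel (fun u v =>
    (∃ i : ZMod m, u = aV m ∧ v = qV i) ∨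
    (∃ i : ZMod m, u = pV i ∧ v = pV (i + 1)) ∨
    (∃ (i : ZMod m) (k : ℕ), k ≤ (m - 2) / 2 ∧
      u = pV i ∧ v = qV (i + (2 * (k : ZMod m) - 1))))

section WalkHelpers

variable {V : Type*}

/-- Build a walk from a chain of adjacent vertices. -/
def mkWalk (G : SimpleGraph V) : (l : List V) → (u v : V) → List.Chain G.Adj u (l ++ [v]) → G.Walk u v
  | [], _, _, h => Walk.cons (List.chain_cons.mp h).1 Walk.nil
  | x :: xs, _, v, h => Walk.cons (List.chain_cons.mp h).1 (mkWalk G xs x v (List.chain_cons.mp h).2)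

lemma mkWalk_support (G : SimpleGraph V) :
    ∀ (l : List V) (u v : V) (h), (mkWalk G l u v h).support = u :: (l ++ [v])
  | [], u, v, h => rfl
  | x :: xs, u, v, h => by
    simp [mkWalk, mkWalk_support G xs x v]
    exact mkWalk_support G xs x v _

/-- A closed walk of length at least 3 whose internal support has no duplicates is a cycle. -/
lemma isCycle_of_support_tail_nodup {G : SimpleGraph V} {u : V} (p : G.Walk u u)
    (hlen : 3 ≤ p.length) (hnd : p.support.tail.Nodup) : p.IsCycle := by
  cases p with
  | nil => simp at hlen
  | cons h q =>
    rename_i w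
    cases q with
    | nil => simp at hlen
    | cons h₂ q₂ =>
      obtain ⟨x, r, h', heq⟩ := Walk.exists_cons_eq_concat h₂ q₂
      rw [heq] at hnd hlen ⊢
      rw [Walk.support_cons, List.tail_cons, Walk.support_concat,
        List.nodup_append] at hnd
      obtain ⟨hr, -, hdisj⟩ := hnd
      have hu : u ∉ r.support := fun hu => hdisj u hu u (by simp) rfl
      have hrlen : 1 ≤ r.length := by
        rw [Walk.length_cons, Walk.length_concat] at hlen; omega
      have hrne : ¬ r.Nil := Walk.not_nil_iff_lt_length.mpr (by omega)
      have hwx : w ≠ x := by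
        intro hxw
        have hx : x ∈ r.support.tail := by
          cases r with
          | nil => simp at hrne
          | cons hh rr => simpa using rr.end_mem_support
        rw [Walk.support_eq_cons] at hr
        rw [List.nodup_cons] at hr
        exact hr.1 (hxw ▸ hx)
      rw [Walk.isCycle_def]
      refine ⟨⟨?_⟩, by simp, ?_⟩
      · rw [Walk.edges_cons, Walk.edges_concat, List.concat_eq_append, List.nodup_cons,
          List.mem_append, List.nodup_append]
        constructor
        · rintro (hmem | hmem)
          · exact hu (r.fst_mem_support_of_mem_edges hmem)
          · simp only [List.mem_singleton] at hmem
            rw [Sym2.eq_iff] at hmem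
            rcases hmem with ⟨h1, h2⟩ | ⟨h1, h2⟩
            · exact hu (h2 ▸ r.start_mem_support)
            · exact hwx h2
        · refine ⟨Walk.edges_nodup_of_support_nodup hr, List.nodup_singleton _, ?_⟩
          intro e he b hb hEq
          simp only [List.mem_singleton] at hb
          subst hb
          subst hEq
          exact hu (r.snd_mem_support_of_mem_edges he)
      · rw [Walk.support_cons, List.tail_cons, Walk.support_concat,
          List.nodup_append]
        exact ⟨hr, List.nodup_singleton _, fun a ha b hb hab => by
          simp only [List.mem_singleton] at hb; subst hb; subst hab; exact hu ha⟩

lemma chain_of_get_compat {R : V → V → Prop} {a : V} {l : List V}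
    (H : (∀ h : 0 < l.length, R a (l.get ⟨0, h⟩)) ∧
      ∀ (i : ℕ) (h : i < l.length - 1),
        R (l.get ⟨i, by omega⟩) (l.get ⟨i+1, by omega⟩)) : List.Chain R a l := by
  rw [List.Chain, List.isChain_iff_getElem]
  obtain ⟨h0, h⟩ := H
  intro i hi
  cases i with
  | zero => simpa using h0 (by simp at hi; omega)
  | succ i => simpa using h i (by simp at hi; omega)

end WalkHelpers

section Adj
variable (m : ℕ)

lemma adj_aq (i : ZMod m) : (HGraph m).Adj (aV m) (qV i) := by
  simp only [HGraph, fromRel_adj]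
  exact ⟨by simp [aV, qV], Or.inl (Or.inl ⟨i, by trivial, by trivial⟩)⟩

lemma adj_pp (hm : 2 ≤ m) (i : ZMod m) : (HGraph m).Adj (pV i) (pV (i + 1)) := by
  haveI : Fact (1 < m) := ⟨hm⟩
  simp only [HGraph, fromRel_adj]
  refine ⟨?_, Or.inl (Or.inr (Or.inl ⟨i, by trivial, by trivial⟩))⟩
  simp only [pV, ne_eq, Sum.inl.injEq]
  intro h
  exact one_ne_zero (left_eq_add.mp h)

lemma adj_pq_sub (i : ZMod m) : (HGraph m).Adj (pV i) (qV (i - 1)) := by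
  simp only [HGraph, fromRel_adj]
  exact ⟨by simp [pV, qV], Or.inl (Or.inr (Or.inr ⟨i, 0, by omega,
    by trivial, congrArg qV (by push_cast; ring)⟩))⟩

lemma adj_pq_add (h4 : 4 ≤ m) (i : ZMod m) : (HGraph m).Adj (pV i) (qV (i + 1)) := by
  simp only [HGraph, fromRel_adj]
  exact ⟨by simp [pV, qV], Or.inl (Or.inr (Or.inr ⟨i, 1, by omega,
    by trivial, congrArg qV (by push_cast; ring)⟩))⟩

/-- The `n`-th vertex (after `a`) of the hamiltonian cycle. -/
def fH (n : ℕ) : GVert m :=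
  if Even n then (if n < m then qV ((n+1 : ℕ) : ZMod m) else pV ((n+1 : ℕ) : ZMod m))
  else (if n < m then pV ((n+1 : ℕ) : ZMod m) else qV ((n+1 : ℕ) : ZMod m))

variable {m}

lemma fH_qlt {n : ℕ} (h1 : Even n) (h2 : n < m) : fH m n = qV ((n+1 : ℕ) : ZMod m) := by
  simp [fH, h1, h2]
lemma fH_pge {n : ℕ} (h1 : Even n) (h2 : ¬ n < m) : fH m n = pV ((n+1 : ℕ) : ZMod m) := by
  simp [fH, h1, h2]
lemma fH_plt {n : ℕ} (h1 : ¬ Even n) (h2 : n < m) : fH m n = pV ((n+1 : ℕ) : ZMod m) := by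
  simp [fH, h1, h2]
lemma fH_qge {n : ℕ} (h1 : ¬ Even n) (h2 : ¬ n < m) : fH m n = qV ((n+1 : ℕ) : ZMod m) := by
  simp [fH, h1, h2]

lemma fH_ne_a (n : ℕ) : fH m n ≠ aV m := by
  unfold fH
  split_ifs <;> simp [pV, qV, aV]

lemma adj_fH (h6 : 6 ≤ m) (heven : Even m) {n : ℕ} (hn : n + 1 < 2 * m) :
    (HGraph m).Adj (fH m n) (fH m (n + 1)) := by
  have hm2 := Nat.even_iff.mp heven
  rcases Nat.even_or_odd n with he | ho
  · have hne : ¬ Even (n + 1) := by simp [Nat.even_add_one, he]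
    have hn2 := Nat.even_iff.mp he
    by_cases hl : n < m
    · have hl1 : n + 1 < m := by omega
      rw [fH_qlt he hl, fH_plt hne hl1]
      have hc : ((n+1 : ℕ) : ZMod m) = ((n+1+1 : ℕ) : ZMod m) - 1 := by push_cast; ring
      rw [hc]
      exact (adj_pq_sub m _).symm
    · have hge1 : ¬ n + 1 < m := by omega
      rw [fH_pge he hl, fH_qge hne hge1]
      have hc : ((n+1+1 : ℕ) : ZMod m) = ((n+1 : ℕ) : ZMod m) + 1 := by push_cast; ring
      rw [hc]
      exact adj_pq_add m (by omega) _
  · have hne : ¬ Even n := Nat.not_even_iff_odd.mpr ho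
    have he1 : Even (n + 1) := ho.add_one
    by_cases hl : n < m
    · by_cases hl1 : n + 1 < m
      · rw [fH_plt hne hl, fH_qlt he1 hl1]
        have hc : ((n+1+1 : ℕ) : ZMod m) = ((n+1 : ℕ) : ZMod m) + 1 := by push_cast; ring
        rw [hc]
        exact adj_pq_add m (by omega) _
      · rw [fH_plt hne hl, fH_pge he1 hl1]
        have hc : ((n+1+1 : ℕ) : ZMod m) = ((n+1 : ℕ) : ZMod m) + 1 := by push_cast; ring
        rw [hc]
        exact adj_pp m (by omega) _
    · have hge1 : ¬ n + 1 < m := by omega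
      rw [fH_qge hne hl, fH_pge he1 hge1]
      have hc : ((n+1 : ℕ) : ZMod m) = ((n+1+1 : ℕ) : ZMod m) - 1 := by push_cast; ring
      rw [hc]
      exact (adj_pq_sub m _).symm

lemma fH_inj (h6 : 6 ≤ m) (heven : Even m) :
    ∀ n < 2 * m, ∀ n' < 2 * m, fH m n = fH m n' → n = n' := by
  have h2m : 2 ∣ m := heven.two_dvd
  intro n hn n' hn' hf
  simp only [fH] at hf
  split_ifs at hf
  all_goals simp only [pV, qV, Sum.inr.injEq, Sum.inl.injEq, reduceCtorEq] at hf
  all_goals (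
    have hmod : n ≡ n' [MOD m] :=
      Nat.ModEq.add_right_cancel' 1 ((ZMod.natCast_eq_natCast_iff _ _ _).mp hf)
    have hmm : n % m = n' % m := hmod
    have hp2 : n % 2 = n' % 2 := hmod.of_dvd h2m
    simp only [Nat.even_iff] at *
    rcases Nat.lt_or_ge n m with hl | hl <;> rcases Nat.lt_or_ge n' m with hl' | hl'
    · rw [Nat.mod_eq_of_lt hl, Nat.mod_eq_of_lt hl'] at hmm; omega
    · rw [Nat.mod_eq_of_lt hl, Nat.mod_eq_sub_mod hl', Nat.mod_eq_of_lt (by omega)] at hmm; omega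
    · rw [Nat.mod_eq_sub_mod hl, Nat.mod_eq_of_lt (by omega), Nat.mod_eq_of_lt hl'] at hmm; omega
    · rw [Nat.mod_eq_sub_mod hl, Nat.mod_eq_of_lt (by omega), Nat.mod_eq_sub_mod hl',
        Nat.mod_eq_of_lt (by omega)] at hmm; omega)

end Adj

/-- For every even integer `m ≥ 6`, the graph `H_m` is Hamiltonian:
there exists a cycle visiting every vertex exactly once. -/
theorem hGraph_hamiltonian (m : ℕ) (h6 : 6 ≤ m) (heven : Even m) :
    ∃ (v : GVert m) (c : (HGraph m).Walk v v), c.IsHamiltonianCycle := by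
  haveI : NeZero m := ⟨by omega⟩
  set L : List (GVert m) := (List.range (2*m)).map (fH m) with hL
  have hLlen : L.length = 2*m := by simp [hL]
  have hlen' : (L ++ [aV m]).length = 2*m+1 := by simp [hLlen]
  have hget : ∀ (i : ℕ) (h : i < (L ++ [aV m]).length),
      (L ++ [aV m]).get ⟨i, h⟩ = if hi : i < 2*m then fH m i else aV m := by
    intro i h
    rw [List.get_eq_getElem]
    by_cases hi : i < 2*m
    · rw [dif_pos hi, List.getElem_append_left (by omega : i < L.length)]
      simp [hL]
    · rw [dif_neg hi, List.getElem_append_right (by omega : L.length ≤ i)]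
      simp
  have hchain : List.Chain (HGraph m).Adj (aV m) (L ++ [aV m]) := by
    apply chain_of_get_compat
    refine ⟨fun h0 => ?_, fun i hi => ?_⟩
    · rw [hget 0 _, dif_pos (by omega)]
      rw [fH_qlt (by simp) (by omega)]
      exact adj_aq m _
    · rw [hget i _, hget (i+1) _]
      have hi' : i < 2*m := by
        rw [hlen'] at hi; omega
      rw [dif_pos hi']
      by_cases h2 : i + 1 < 2*m
      · rw [dif_pos h2]
        exact adj_fH h6 heven h2
      · rw [dif_neg h2]
        have hoddd : ¬ Even i := by
          rw [Nat.even_iff]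
          have := Nat.even_iff.mp heven
          omega
        rw [fH_qge hoddd (by omega)]
        exact (adj_aq m _).symm
  have hnodupL : L.Nodup := by
    refine List.Nodup.map_on ?_ List.nodup_range
    intro x hx y hy hxy
    exact fH_inj h6 heven x (by simpa using hx) y (by simpa using hy) hxy
  have hnodup : (L ++ [aV m]).Nodup := by
    rw [List.nodup_append]
    refine ⟨hnodupL, List.nodup_singleton _, ?_⟩
    intro x hx b hb hxb
    simp only [List.mem_singleton] at hb
    subst hb
    subst hxb
    obtain ⟨j, -, hj⟩ := List.mem_map.mp (hL ▸ hx)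
    exact fH_ne_a j hj
  have hcard : Fintype.card (GVert m) = 2*m+1 := by
    simp only [GVert, Fintype.card_sum, ZMod.card, Fintype.card_unit]
    omega
  have hmemall : ∀ x : GVert m, x ∈ L ++ [aV m] := by
    intro x
    have h1 : (L ++ [aV m]).toFinset = Finset.univ :=
      Finset.eq_univ_of_card _ (by rw [List.toFinset_card_of_nodup hnodup, hlen', hcard])
    rw [← List.mem_toFinset, h1]
    exact Finset.mem_univ x
  refine ⟨aV m, mkWalk (HGraph m) L (aV m) (aV m) hchain, ?_⟩
  rw [Walk.isHamiltonianCycle_iff_isCycle_and_support_count_tail_eq_one]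
  have hsup : (mkWalk (HGraph m) L (aV m) (aV m) hchain).support = aV m :: (L ++ [aV m]) :=
    mkWalk_support _ _ _ _ _
  constructor
  · apply isCycle_of_support_tail_nodup
    · have hls := Walk.length_support (mkWalk (HGraph m) L (aV m) (aV m) hchain)
      rw [hsup] at hls
      simp only [List.length_cons, hlen'] at hls
      omega
    · rw [hsup, List.tail_cons]
      exact hnodup
  · intro x
    rw [hsup, List.tail_cons]
    exact @List.count_eq_one_of_mem _ instBEqOfDecidableEq _ _ _ hnodup (hmemall x)
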